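/- If g : [0,1] → ℝ is T-times monotone (i.e., (-1)^k g^{(k)}(X) ≥ 0 for all X ∈ [0,1] and k ≤ T) with g ≥ 0 on [0,1], and f_T(X) = X, f_{t-1}(X) = f_t(X) - n_t·f_t'(X)·g(X) for positive reals n_t, then each f_t is strictly increasing on [0,1] with f_t'(X) ≥ 1 for all X ∈ [0,1]. -/

import Mathlib

open Set

private lemma itd_add {m : ℕ} {F G : ℝ → ℝ} (hF : ContDiff ℝ (m:ℕ∞) F)
    (hG : ContDiff ℝ (m:ℕ∞) G) (x : ℝ) :
    iteratedDeriv m (fun y => F y + G y) x = iteratedDeriv m F x + iteratedDeriv m G x := by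
  rw [show (fun y => F y + G y) = F + G from rfl, ← iteratedDerivWithin_univ,
    ← iteratedDerivWithin_univ, ← iteratedDerivWithin_univ]
  exact iteratedDerivWithin_add (Set.mem_univ x) uniqueDiffOn_univ hF.contDiffAt.contDiffWithinAt hG.contDiffAt.contDiffWithinAt

private lemma itd_const_mul {m : ℕ} {F : ℝ → ℝ} (hF : ContDiff ℝ (m:ℕ∞) F) (c : ℝ) (x : ℝ) :
    iteratedDeriv m (fun y => c * F y) x = c * iteratedDeriv m F x := by
  rw [← iteratedDerivWithin_univ, ← iteratedDerivWithin_univ]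
  exact iteratedDerivWithin_const_mul (Set.mem_univ x) uniqueDiffOn_univ c hF.contDiffAt.contDiffWithinAt

private lemma contDiff_deriv_of {n : ℕ} {F : ℝ → ℝ} (hF : ContDiff ℝ ((n+1 : ℕ):ℕ∞) F) :
    ContDiff ℝ ((n:ℕ):ℕ∞) (deriv F) := by
  have h : ContDiff ℝ (((n:ℕ∞) : WithTop ℕ∞) + 1) F := by
    exact_mod_cast hF
  exact (contDiff_succ_iff_deriv.mp h).2.2

/-- product of two alternating-sign functions is alternating-sign -/
private lemma prodAlt : ∀ (m : ℕ) (φ ψ : ℝ → ℝ), ContDiff ℝ (m:ℕ∞) φ → ContDiff ℝ (m:ℕ∞) ψ →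
    (∀ j ≤ m, ∀ X ∈ Set.Icc (0:ℝ) 1, 0 ≤ (-1:ℝ)^j * iteratedDeriv j φ X) →
    (∀ j ≤ m, ∀ X ∈ Set.Icc (0:ℝ) 1, 0 ≤ (-1:ℝ)^j * iteratedDeriv j ψ X) →
    ∀ X ∈ Set.Icc (0:ℝ) 1, 0 ≤ (-1:ℝ)^m * iteratedDeriv m (fun y => φ y * ψ y) X := by
  intro m
  induction m with
  | zero =>
    intro φ ψ _ _ sφ sψ X hX
    simpa using mul_nonneg (by simpa using sφ 0 le_rfl X hX) (by simpa using sψ 0 le_rfl X hX)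
  | succ m IH =>
    intro φ ψ hφ hψ sφ sψ X hX
    have hφd : Differentiable ℝ φ := hφ.differentiable (by exact_mod_cast (show m+1 ≠ 0 by omega))
    have hψd : Differentiable ℝ ψ := hψ.differentiable (by exact_mod_cast (show m+1 ≠ 0 by omega))
    have hφ' : ContDiff ℝ (m:ℕ∞) (deriv φ) := contDiff_deriv_of hφ
    have hψ' : ContDiff ℝ (m:ℕ∞) (deriv ψ) := contDiff_deriv_of hψ
    have hder : deriv (fun y => φ y * ψ y) = fun y => deriv φ y * ψ y + φ y * deriv ψ y := by
      funext y
      exact deriv_mul (hφd y) (hψd y)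
    have hA : ContDiff ℝ (m:ℕ∞) (fun y => deriv φ y * ψ y) :=
      hφ'.mul (hψ.of_le (by exact_mod_cast Nat.le_succ m))
    have hB : ContDiff ℝ (m:ℕ∞) (fun y => φ y * deriv ψ y) :=
      (hφ.of_le (by exact_mod_cast Nat.le_succ m)).mul hψ'
    have key : iteratedDeriv (m+1) (fun y => φ y * ψ y) X
        = iteratedDeriv m (fun y => deriv φ y * ψ y) X
          + iteratedDeriv m (fun y => φ y * deriv ψ y) X := by
      rw [iteratedDeriv_succ', hder, itd_add hA hB]
    have e1 : iteratedDeriv m (fun y => (-(deriv φ y)) * ψ y) X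
        = -iteratedDeriv m (fun y => deriv φ y * ψ y) X := by
      simp_rw [neg_mul]
      exact iteratedDeriv_neg m _ X
    have e2 : iteratedDeriv m (fun y => φ y * (-(deriv ψ y))) X
        = -iteratedDeriv m (fun y => φ y * deriv ψ y) X := by
      simp_rw [mul_neg]
      exact iteratedDeriv_neg m _ X
    have s1 : 0 ≤ (-1:ℝ)^m * iteratedDeriv m (fun y => (-(deriv φ y)) * ψ y) X := by
      refine IH (fun y => -(deriv φ y)) ψ hφ'.neg (hψ.of_le (by exact_mod_cast Nat.le_succ m)) ?_
        (fun j hj => sψ j (le_trans hj (Nat.le_succ m))) X hX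
      intro j hj Y hY
      have : iteratedDeriv j (fun y => -(deriv φ y)) Y = -(iteratedDeriv (j+1) φ Y) := by
        rw [iteratedDeriv_fun_neg, ← iteratedDeriv_succ']
      rw [this]
      have h := sφ (j+1) (by omega) Y hY
      have heq : (-1:ℝ)^j * -(iteratedDeriv (j+1) φ Y) = (-1)^(j+1) * iteratedDeriv (j+1) φ Y := by
        ring
      rw [heq]; exact h
    have s2 : 0 ≤ (-1:ℝ)^m * iteratedDeriv m (fun y => φ y * (-(deriv ψ y))) X := by
      refine IH φ (fun y => -(deriv ψ y)) (hφ.of_le (by exact_mod_cast Nat.le_succ m)) hψ'.neg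
        (fun j hj => sφ j (le_trans hj (Nat.le_succ m))) ?_ X hX
      intro j hj Y hY
      have : iteratedDeriv j (fun y => -(deriv ψ y)) Y = -(iteratedDeriv (j+1) ψ Y) := by
        rw [iteratedDeriv_fun_neg, ← iteratedDeriv_succ']
      rw [this]
      have h := sψ (j+1) (by omega) Y hY
      have heq : (-1:ℝ)^j * -(iteratedDeriv (j+1) ψ Y) = (-1)^(j+1) * iteratedDeriv (j+1) ψ Y := by
        ring
      rw [heq]; exact h
    rw [e1] at s1
    rw [e2] at s2
    rw [key]
    have heq : (-1:ℝ)^(m+1) * (iteratedDeriv m (fun y => deriv φ y * ψ y) X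
        + iteratedDeriv m (fun y => φ y * deriv ψ y) X)
      = (-1)^m * -iteratedDeriv m (fun y => deriv φ y * ψ y) X
        + (-1)^m * -iteratedDeriv m (fun y => φ y * deriv ψ y) X := by ring
    rw [heq]; linarith

private lemma itd_sub {m : ℕ} {F G : ℝ → ℝ} (hF : ContDiff ℝ (m:ℕ∞) F)
    (hG : ContDiff ℝ (m:ℕ∞) G) (x : ℝ) :
    iteratedDeriv m (fun y => F y - G y) x = iteratedDeriv m F x - iteratedDeriv m G x := by
  rw [show (fun y => F y - G y) = F - G from rfl, ← iteratedDerivWithin_univ,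
    ← iteratedDerivWithin_univ, ← iteratedDerivWithin_univ]
  exact iteratedDerivWithin_sub (Set.mem_univ x) uniqueDiffOn_univ hF.contDiffAt.contDiffWithinAt hG.contDiffAt.contDiffWithinAt

private lemma itd_const_fun (c : ℝ) : ∀ k, iteratedDeriv (k+1) (fun _ : ℝ => c) = fun _ => 0
  | 0 => by funext x; simp [iteratedDeriv_one]
  | (k+1) => by
    rw [iteratedDeriv_succ']
    have h : deriv (fun _ : ℝ => c) = fun _ : ℝ => (0:ℝ) := by funext y; simp
    rw [h]
    exact itd_const_fun 0 k


/-- If `g` is `T`-times monotone on `[0,1]` (i.e. `(-1)^k·g⁽ᵏ⁾ ≥ 0` there for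
all `k ≤ T`) and nonnegative on `[0,1]`, then with `f_T(X) = X`,
`f_{t-1}(X) = f_t(X) - n_t·f_t'(X)·g(X)` (with `n_t > 0`), each `f_t` is
strictly increasing on `[0,1]` with `f_t' ≥ 1` on `[0,1]`. -/
theorem stmt_15 (T : ℕ) (g : ℝ → ℝ) (hg : ContDiff ℝ ((T : ℕ) : ℕ∞) g)
    (hmon : ∀ k ≤ T, ∀ X ∈ Set.Icc (0:ℝ) 1, 0 ≤ (-1)^k * iteratedDeriv k g X)
    (hpos : ∀ X ∈ Set.Icc (0:ℝ) 1, 0 ≤ g X)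
    (n : ℕ → ℝ) (hn : ∀ t, 1 ≤ t → t ≤ T → 0 < n t)
    (f : ℕ → ℝ → ℝ) (hT : ∀ X : ℝ, f T X = X)
    (hrec : ∀ t, 1 ≤ t → t ≤ T → ∀ X : ℝ,
      f (t-1) X = f t X - n t * deriv (f t) X * g X)
    (t : ℕ) (ht : t ≤ T) :
    StrictMonoOn (f t) (Set.Icc (0:ℝ) 1) ∧
    ∀ X ∈ Set.Icc (0:ℝ) 1, 1 ≤ deriv (f t) X := by
  have key : ∀ d t', t' + d = T →
      ContDiff ℝ ((t'+1 : ℕ):ℕ∞) (f t') ∧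
      (∀ m, 1 ≤ m → m ≤ t'+1 → ∀ X ∈ Set.Icc (0:ℝ) 1,
        (-1:ℝ)^m * iteratedDeriv m (f t') X ≤ 0) ∧
      (∀ X ∈ Set.Icc (0:ℝ) 1, 1 ≤ deriv (f t') X) := by
    intro d
    induction d with
    | zero =>
      intro t' h
      have ht' : t' = T := by omega
      subst ht'
      have hid : f t' = fun X => X := funext hT
      rw [hid]
      refine ⟨contDiff_id, ?_, ?_⟩
      · intro m hm hm' X hX
        rcases m with _ | _ | k
        · omega
        · simp [iteratedDeriv_one]
        · have h2 : iteratedDeriv (k+2) (fun X : ℝ => X) = iteratedDeriv (k+1) (fun _ : ℝ => (1:ℝ)) := by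
            rw [iteratedDeriv_succ']
            funext y
            simp
          rw [h2, itd_const_fun 1 k]
          simp
      · intro X hX
        simp
    | succ d IH =>
      intro t' h
      have hstep : t' + 1 ≤ T := by omega
      obtain ⟨C1, S1, D1⟩ := IH (t'+1) (by omega)
      have hc := hn (t'+1) (by omega) hstep
      have hft : f t' = fun X => f (t'+1) X - n (t'+1) * (deriv (f (t'+1)) X * g X) := by
        funext X
        have h0 := hrec (t'+1) (by omega) hstep X
        simpa [Nat.add_sub_cancel, mul_assoc] using h0
      have Cd : ContDiff ℝ ((t'+1:ℕ):ℕ∞) (deriv (f (t'+1))) := contDiff_deriv_of C1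
      have Cg : ContDiff ℝ ((t'+1:ℕ):ℕ∞) g := hg.of_le (by exact_mod_cast hstep)
      have Cprod : ContDiff ℝ ((t'+1:ℕ):ℕ∞)
          (fun X => n (t'+1) * (deriv (f (t'+1)) X * g X)) :=
        contDiff_const.mul (Cd.mul Cg)
      have C1' : ContDiff ℝ ((t'+1:ℕ):ℕ∞) (f (t'+1)) :=
        C1.of_le (by exact_mod_cast Nat.le_succ (t'+1))
      have Ct : ContDiff ℝ ((t'+1:ℕ):ℕ∞) (f t') := by
        rw [hft]; exact C1'.sub Cprod
      have sphi : ∀ j ≤ t'+1, ∀ X ∈ Set.Icc (0:ℝ) 1,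
          0 ≤ (-1:ℝ)^j * iteratedDeriv j (deriv (f (t'+1))) X := by
        intro j hj X hX
        rcases Nat.eq_zero_or_pos j with rfl | hj0
        · simpa [iteratedDeriv_zero] using le_trans zero_le_one (D1 X hX)
        · obtain ⟨i, rfl⟩ := Nat.exists_eq_succ_of_ne_zero hj0.ne'
          have e : iteratedDeriv (i+1) (deriv (f (t'+1))) X = iteratedDeriv (i+2) (f (t'+1)) X := by
            rw [show iteratedDeriv (i+2) (f (t'+1)) = iteratedDeriv (i+1) (deriv (f (t'+1))) from
              iteratedDeriv_succ']
          rw [e]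
          have h2 := S1 (i+2) (by omega) (by omega) X hX
          have heq : (-1:ℝ)^(i+1) * iteratedDeriv (i+2) (f (t'+1)) X
              = -((-1:ℝ)^(i+2) * iteratedDeriv (i+2) (f (t'+1)) X) := by ring
          rw [heq]
          linarith
      have SP : ∀ m ≤ t'+1, ∀ X ∈ Set.Icc (0:ℝ) 1,
          0 ≤ (-1:ℝ)^m * iteratedDeriv m (fun y => deriv (f (t'+1)) y * g y) X := by
        intro m hm
        exact prodAlt m _ _ (Cd.of_le (by exact_mod_cast hm)) (Cg.of_le (by exact_mod_cast hm))
          (fun j hj => sphi j (le_trans hj hm))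
          (fun j hj => hmon j (le_trans (le_trans hj hm) hstep))
      refine ⟨Ct, ?_, ?_⟩
      · intro m hm hm' X hX
        have Cdm : ContDiff ℝ (m:ℕ∞) (f (t'+1)) := C1'.of_le (by exact_mod_cast hm')
        have Cpm : ContDiff ℝ (m:ℕ∞) (fun X => n (t'+1) * (deriv (f (t'+1)) X * g X)) :=
          Cprod.of_le (by exact_mod_cast hm')
        have Cqm : ContDiff ℝ (m:ℕ∞) (fun y => deriv (f (t'+1)) y * g y) :=
          (Cd.mul Cg).of_le (by exact_mod_cast hm')
        have e : iteratedDeriv m (f t') X = iteratedDeriv m (f (t'+1)) X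
            - n (t'+1) * iteratedDeriv m (fun y => deriv (f (t'+1)) y * g y) X := by
          rw [hft, itd_sub Cdm Cpm, itd_const_mul Cqm]
        rw [e]
        have h1 := S1 m hm (by omega) X hX
        have h2 := SP m hm' X hX
        have heq : (-1:ℝ)^m * (iteratedDeriv m (f (t'+1)) X
              - n (t'+1) * iteratedDeriv m (fun y => deriv (f (t'+1)) y * g y) X)
            = (-1:ℝ)^m * iteratedDeriv m (f (t'+1)) X
              - n (t'+1) * ((-1:ℝ)^m * iteratedDeriv m (fun y => deriv (f (t'+1)) y * g y) X) := by
          ring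
        rw [heq]
        nlinarith [mul_nonneg hc.le h2]
      · intro X hX
        have dF : DifferentiableAt ℝ (f (t'+1)) X :=
          (C1.differentiable (by exact_mod_cast (show t'+1+1 ≠ 0 by omega))).differentiableAt
        have dD : DifferentiableAt ℝ (deriv (f (t'+1))) X :=
          (Cd.differentiable (by exact_mod_cast (show t'+1 ≠ 0 by omega))).differentiableAt
        have dG : DifferentiableAt ℝ g X :=
          (hg.differentiable (by exact_mod_cast (show T ≠ 0 by omega))).differentiableAt
        rw [hft, deriv_fun_sub dF ((show DifferentiableAt ℝ (fun y => deriv (f (t'+1)) y * g y) X from dD.mul dG).const_mul (n (t'+1))),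
          deriv_const_mul _ (show DifferentiableAt ℝ (fun y => deriv (f (t'+1)) y * g y) X from dD.mul dG), deriv_fun_mul dD dG]
        have A2 : deriv (deriv (f (t'+1))) X ≤ 0 := by
          have h2 := S1 2 (by omega) (by omega) X hX
          have e2 : iteratedDeriv 2 (f (t'+1)) X = deriv (deriv (f (t'+1))) X := by
            rw [iteratedDeriv_succ, iteratedDeriv_one]
          rw [e2] at h2
          nlinarith [h2]
        have g0 : 0 ≤ g X := hpos X hX
        have g1 : deriv g X ≤ 0 := by
          have h1 := hmon 1 (by omega) X hX
          have e1 : iteratedDeriv 1 g X = deriv g X := by rw [iteratedDeriv_one]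
          rw [e1] at h1
          nlinarith [h1]
        have D1X := D1 X hX
        have t1 : deriv (deriv (f (t'+1))) X * g X ≤ 0 :=
          mul_nonpos_of_nonpos_of_nonneg A2 g0
        have t2 : deriv (f (t'+1)) X * deriv g X ≤ 0 :=
          mul_nonpos_of_nonneg_of_nonpos (by linarith) g1
        have t3 : n (t'+1) * (deriv (deriv (f (t'+1))) X * g X
            + deriv (f (t'+1)) X * deriv g X) ≤ 0 :=
          mul_nonpos_of_nonneg_of_nonpos hc.le (by linarith)
        linarith
  obtain ⟨C, S, D⟩ := key (T - t) t (by omega)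
  refine ⟨?_, D⟩
  exact strictMonoOn_of_deriv_pos (convex_Icc 0 1) C.continuous.continuousOn
    (fun x hx => lt_of_lt_of_le one_pos (D x (interior_subset hx)))
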